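/- arXiv:0909.0298 — 7 statements merged into one kernel-verified Lean document; each statement's English description precedes it below -/
import Mathlib

section
/- (Theorem 1, primary resolution of Wu's Conjecture.) Let k be a real number that is not a nonnegative integer, let z₁ be a real number with z₁ > 1, let M ∈ ℂ with M ≠ 0, and define c_n = M · z₁^k · γ_n(k) · (−z₁)^{−n} for n ∈ ℕ (the Taylor coefficients of f(z) = M(z₁ − z)^k about 0). Set R_n = c_{n+1}/c_n and D_n = R_{n+1}/R_n. Then for every n ≥ 1: (n+1) − (n+2)·D_n ≠ 0, and the base parameters are recovered by k = n + (n+1)/((n+1) − (n+2)·D_n), z₁ = (n − k)/((n+1)·R_n), and M = c₀ · z₁^{−k} (principal-branch real power z₁^{−k}). -/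
/-- The generalized binomial coefficient γ_n(k) = k(k−1)⋯(k−n+1)/n!, with γ_0(k) = 1. -/
noncomputable def genBinom (k : ℂ) (n : ℕ) : ℂ :=
  (∏ i ∈ Finset.range n, (k - i)) / (n.factorial : ℂ)

/-- Theorem 1 of Wu's paper (primary resolution to the Conjecture): from the Taylor
coefficients c_n = M·z₁^k·γ_n(k)·(−z₁)^{−n} of f(z) = M(z₁−z)^k, the base parameters
(k, z₁, M) are recovered, for every n ≥ 1, by
k = n + (n+1)/((n+1) − (n+2)D_n), z₁ = (n−k)/((n+1)R_n), M = c₀·z₁^{−k}. -/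
theorem stmt_4 (k z₁ : ℝ) (hk : ∀ m : ℕ, k ≠ (m : ℝ)) (hz₁ : 1 < z₁)
    (M : ℂ) (hM : M ≠ 0) (c R D : ℕ → ℂ)
    (hc : ∀ n : ℕ,
      c n = M * (z₁ : ℂ) ^ (k : ℂ) * genBinom (k : ℂ) n * (-(z₁ : ℂ)) ^ (-(n : ℤ)))
    (hR : ∀ n : ℕ, R n = c (n + 1) / c n)
    (hD : ∀ n : ℕ, D n = R (n + 1) / R n) :
    ∀ n : ℕ, 1 ≤ n →
      ((n : ℂ) + 1) - ((n : ℂ) + 2) * D n ≠ 0 ∧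
      (k : ℂ) = (n : ℂ) + ((n : ℂ) + 1) / (((n : ℂ) + 1) - ((n : ℂ) + 2) * D n) ∧
      (z₁ : ℂ) = ((n : ℂ) - (k : ℂ)) / (((n : ℂ) + 1) * R n) ∧
      M = c 0 * ((z₁ ^ (-k) : ℝ) : ℂ) := by
  have hz0 : (z₁ : ℂ) ≠ 0 := by
    simp only [ne_eq, Complex.ofReal_eq_zero]
    linarith
  have hz0' : (-(z₁ : ℂ)) ≠ 0 := neg_ne_zero.mpr hz0
  have hkn : ∀ m : ℕ, (k : ℂ) - m ≠ 0 := by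
    intro m
    have := hk m
    simp only [ne_eq, sub_eq_zero]
    exact_mod_cast this
  have hn1 : ∀ m : ℕ, ((m : ℂ) + 1) ≠ 0 := by
    intro m
    have : ((m + 1 : ℕ) : ℂ) ≠ 0 := Nat.cast_ne_zero.mpr (Nat.succ_ne_zero m)
    push_cast at this
    exact this
  have hgb : ∀ m : ℕ, genBinom (k : ℂ) m ≠ 0 := by
    intro m
    unfold genBinom
    apply div_ne_zero
    · exact Finset.prod_ne_zero_iff.mpr fun i _ => hkn i
    · exact_mod_cast m.factorial_ne_zero
  have hpow : (z₁ : ℂ) ^ (k : ℂ) ≠ 0 := by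
    intro h
    rcases (Complex.cpow_eq_zero_iff _ _).mp h with ⟨h1, _⟩
    exact hz0 h1
  have hcn : ∀ m : ℕ, c m ≠ 0 := by
    intro m
    rw [hc m]
    exact mul_ne_zero (mul_ne_zero (mul_ne_zero hM hpow) (hgb m)) (zpow_ne_zero _ hz0')
  have hgbsucc : ∀ m : ℕ, genBinom (k : ℂ) (m + 1)
      = genBinom (k : ℂ) m * (((k : ℂ) - m) / ((m : ℂ) + 1)) := by
    intro m
    have h1 := hn1 m
    unfold genBinom
    rw [Finset.prod_range_succ, Nat.factorial_succ]
    have h2 : ((m.factorial : ℕ) : ℂ) ≠ 0 := by exact_mod_cast m.factorial_ne_zero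
    push_cast
    field_simp
    try exact Or.inl trivial
  have hcsucc : ∀ m : ℕ, c (m + 1)
      = c m * (((k : ℂ) - m) / (((m : ℂ) + 1) * (-(z₁ : ℂ)))) := by
    intro m
    have h1 := hn1 m
    rw [hc (m + 1), hc m, hgbsucc m]
    have hzp : (-(z₁ : ℂ)) ^ (-((m + 1 : ℕ) : ℤ))
        = (-(z₁ : ℂ)) ^ (-(m : ℤ)) * (-(z₁ : ℂ))⁻¹ := by
      rw [show (-((m + 1 : ℕ) : ℤ)) = (-(m : ℤ)) + (-1) by push_cast; ring,
        zpow_add₀ hz0', zpow_neg_one]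
    rw [hzp]
    field_simp
  have hRval : ∀ m : ℕ, R m = ((k : ℂ) - m) / (((m : ℂ) + 1) * (-(z₁ : ℂ))) := by
    intro m
    rw [hR m, hcsucc m, mul_comm, mul_div_assoc, div_self (hcn m), mul_one]
  have hRne : ∀ m : ℕ, R m ≠ 0 := by
    intro m
    rw [hRval m]
    exact div_ne_zero (hkn m) (mul_ne_zero (hn1 m) hz0')
  intro n _
  have h1 : ((n : ℂ) + 1) ≠ 0 := hn1 n
  have h2 : ((n : ℂ) + 1 + 1) ≠ 0 := by
    have := hn1 (n + 1); push_cast at this; convert this using 2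
  have h3 : (k : ℂ) - n ≠ 0 := hkn n
  have h4 : (k : ℂ) - ((n : ℂ) + 1) ≠ 0 := by
    have := hkn (n + 1); push_cast at this; exact this
  have hDval : D n = (((k : ℂ) - ((n : ℂ) + 1)) * ((n : ℂ) + 1)) /
      ((((n : ℂ) + 1) + 1) * ((k : ℂ) - n)) := by
    rw [hD n, hRval (n + 1), hRval n]
    push_cast
    field_simp
  have key : ((n : ℂ) + 1) - ((n : ℂ) + 2) * D n = ((n : ℂ) + 1) / ((k : ℂ) - n) := by
    rw [hDval]
    field_simp
    ring
  have hkey_ne : ((n : ℂ) + 1) - ((n : ℂ) + 2) * D n ≠ 0 := by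
    rw [key]
    exact div_ne_zero h1 h3
  refine ⟨hkey_ne, ?_, ?_, ?_⟩
  · rw [key]
    field_simp
    ring
  · rw [eq_div_iff (mul_ne_zero h1 (hRne n)), hRval n]
    field_simp
    ring
  · rw [hc 0]
    simp only [genBinom, Finset.range_zero, Finset.prod_empty, Nat.factorial_zero,
      Nat.cast_one, Nat.cast_zero, neg_zero, zpow_zero, div_one, mul_one]
    have heq : ((z₁ ^ (-k) : ℝ) : ℂ) = (z₁ : ℂ) ^ (-(k : ℂ)) := by
      rw [Complex.ofReal_cpow (le_of_lt (by linarith)), Complex.ofReal_neg]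
    rw [heq, mul_assoc, ← Complex.cpow_add _ _ hz0]
    simp
end

section
/- Let M, k, z₁ be real numbers with z₁ > 1, and define f(z) = M·(z₁ − z)^k for |z| < z₁ and F(z) = −M·(z₁ − 1/z)^k for |z| > 1/z₁ (principal-branch complex powers, well defined since the bases have positive real part). Then: (a) F is complex differentiable at every z ∈ ℂ with |z| > 1/z₁; and (b) for every θ ∈ ℝ, F(e^{iθ}) = −conj(f(e^{iθ})); in particular Re F(e^{iθ}) = −Re f(e^{iθ}) and Im F(e^{iθ}) = Im f(e^{iθ}) on the unit circle. -/
/-- The Complement Conjecture construction (14)–(15b): with f(z) = M(z₁ − z)^k and the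
complement function F(z) = −M(z₁ − 1/z)^k (M, k, z₁ real, z₁ > 1, principal powers),
(a) F is complex differentiable at every z with |z| > 1/z₁, and (b) on the unit circle
F(e^{iθ}) = −conj(f(e^{iθ})); in particular Re F = −Re f and Im F = Im f there. -/
theorem stmt_8 (M k z₁ : ℝ) (hz₁ : 1 < z₁) (f F : ℂ → ℂ)
    (hf : ∀ z : ℂ, f z = (M : ℂ) * ((z₁ : ℂ) - z) ^ (k : ℂ))
    (hF : ∀ z : ℂ, F z = -(M : ℂ) * ((z₁ : ℂ) - 1 / z) ^ (k : ℂ)) :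
    (∀ z : ℂ, 1 / z₁ < ‖z‖ → DifferentiableAt ℂ F z) ∧
    (∀ θ : ℝ,
      F (Complex.exp (θ * Complex.I)) =
          -(starRingEnd ℂ) (f (Complex.exp (θ * Complex.I))) ∧
      (F (Complex.exp (θ * Complex.I))).re = -(f (Complex.exp (θ * Complex.I))).re ∧
      (F (Complex.exp (θ * Complex.I))).im = (f (Complex.exp (θ * Complex.I))).im) := by
  have hz₁0 : (0:ℝ) < z₁ := lt_trans one_pos hz₁
  constructor
  · intro z hz
    have hz0 : ‖z‖ > 0 := lt_trans (one_div_pos.mpr hz₁0) hz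
    have hzne : z ≠ 0 := by
      intro h; simp [h] at hz0
    have hslit : (z₁ : ℂ) - 1 / z ∈ Complex.slitPlane := by
      left
      have h1 : (1 / z : ℂ).re ≤ ‖(1 / z : ℂ)‖ := Complex.re_le_norm _
      have h2 : ‖(1 / z : ℂ)‖ < z₁ := by
        rw [norm_div, norm_one]
        rw [div_lt_iff₀ hz0]
        have := (div_lt_iff₀ hz₁0).mp hz
        linarith [mul_comm ‖z‖ z₁]
      simp only [Complex.sub_re, Complex.ofReal_re]
      linarith
    have : DifferentiableAt ℂ (fun z => -(M : ℂ) * ((z₁ : ℂ) - 1 / z) ^ (k : ℂ)) z := by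
      apply DifferentiableAt.const_mul
      apply DifferentiableAt.cpow
      · exact (differentiableAt_const _).sub ((differentiableAt_const _).div differentiableAt_id hzne)
      · exact differentiableAt_const _
      · exact hslit
    exact this.congr_of_eventuallyEq (Filter.Eventually.of_forall hF)
  · intro θ
    set z := Complex.exp (θ * Complex.I)
    have hinv : 1 / z = (starRingEnd ℂ) z := by
      rw [← Complex.exp_conj]
      simp [z, ← Complex.exp_neg, Complex.exp_neg]
    have harg : ((z₁ : ℂ) - z).arg ≠ Real.pi := by
      have hre : 0 < ((z₁ : ℂ) - z).re := by
        have : z.re ≤ 1 := by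
          calc z.re ≤ ‖z‖ := Complex.re_le_norm _
          _ = 1 := by simp [z, Complex.norm_exp]
        simp only [Complex.sub_re, Complex.ofReal_re]
        linarith
      intro h
      have := Complex.arg_eq_pi_iff.mp h
      linarith [this.1]
    have hmain : F z = -(starRingEnd ℂ) (f z) := by
      rw [hF, hf, hinv]
      have : (z₁ : ℂ) - (starRingEnd ℂ) z = (starRingEnd ℂ) ((z₁ : ℂ) - z) := by
        simp [Complex.conj_ofReal]
      rw [this, Complex.conj_cpow _ _ harg]
      simp [Complex.conj_ofReal, neg_mul]
    refine ⟨hmain, ?_, ?_⟩ <;> rw [hmain] <;> simp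
end

section
/- Let r > 1 and let f : ℂ → ℂ be holomorphic on the open ball of radius r centered at 0, and let θ₀ ∈ ℝ. Then the Cauchy principal value of the boundary integral reproduces f on the unit circle: the limit as ε → 0⁺ of (1/π) · ( ∫_{θ₀+ε}^{θ₀+π} f(e^{iφ}) · e^{iφ}/(e^{iφ} − e^{iθ₀}) dφ + ∫_{θ₀−π}^{θ₀−ε} f(e^{iφ}) · e^{iφ}/(e^{iφ} − e^{iθ₀}) dφ ) exists and equals f(e^{iθ₀}). -/
open Complex intervalIntegral Metric Set Filter

lemma aux_exp_ne_one {u : ℝ} (h1 : 0 < u) (h2 : u < 2 * Real.pi) :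
    Complex.exp (Complex.I * u) ≠ 1 := by
  intro h
  rw [Complex.exp_eq_one_iff] at h
  obtain ⟨n, hn⟩ := h
  have hu : (u : ℂ) = ((n * (2 * Real.pi) : ℝ) : ℂ) := by
    have hI : Complex.I ≠ 0 := Complex.I_ne_zero
    push_cast
    apply mul_left_cancel₀ hI
    rw [hn]; ring
  have hu' : u = n * (2 * Real.pi) := by exact_mod_cast hu
  have h2π : (0:ℝ) < 2 * Real.pi := by positivity
  have hn0 : 0 < (n:ℝ) := by
    by_contra hc
    push_neg at hc
    nlinarith [hu' ▸ h1]
  have hn1 : (n:ℝ) < 1 := by nlinarith [hu' ▸ h2]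
  have : (0:ℤ) < n := by exact_mod_cast hn0
  have : (n:ℤ) < 1 := by exact_mod_cast hn1
  omega

lemma aux_exp_add_ne {θ₀ u : ℝ} (h : Complex.exp (Complex.I * u) ≠ 1) :
    Complex.exp (Complex.I * (θ₀ + u : ℝ)) ≠ Complex.exp (Complex.I * θ₀) := by
  intro heq
  apply h
  have : Complex.exp (Complex.I * θ₀) * Complex.exp (Complex.I * u)
      = Complex.exp (Complex.I * θ₀) * 1 := by
    rw [mul_one, ← Complex.exp_add, ← heq]
    push_cast; ring_nf
  exact mul_left_cancel₀ (Complex.exp_ne_zero _) this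

lemma aux_exp_neg_ne_one {u : ℝ} (h : Complex.exp (Complex.I * u) ≠ 1) :
    Complex.exp (Complex.I * (-u : ℝ)) ≠ 1 := by
  intro heq
  apply h
  have hmul : Complex.exp (Complex.I * u) * Complex.exp (Complex.I * (-u : ℝ)) = 1 := by
    rw [← Complex.exp_add]
    push_cast
    rw [show Complex.I * u + Complex.I * (-(u:ℂ)) = 0 by ring, Complex.exp_zero]
  rw [heq, mul_one] at hmul
  exact hmul

lemma aux_exp_sub_ne {θ₀ u : ℝ} (h : Complex.exp (Complex.I * u) ≠ 1) :
    Complex.exp (Complex.I * (θ₀ - u : ℝ)) ≠ Complex.exp (Complex.I * θ₀) := by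
  have := aux_exp_add_ne (θ₀ := θ₀) (aux_exp_neg_ne_one h)
  rwa [show θ₀ + -u = θ₀ - u by ring] at this

lemma aux_sym {θ₀ u : ℝ}
    (ha : Complex.exp (Complex.I * (θ₀ + u : ℝ)) ≠ Complex.exp (Complex.I * θ₀))
    (hb : Complex.exp (Complex.I * (θ₀ - u : ℝ)) ≠ Complex.exp (Complex.I * θ₀)) :
    Complex.exp (Complex.I * (θ₀ + u : ℝ)) /
        (Complex.exp (Complex.I * (θ₀ + u : ℝ)) - Complex.exp (Complex.I * θ₀)) +
      Complex.exp (Complex.I * (θ₀ - u : ℝ)) /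
        (Complex.exp (Complex.I * (θ₀ - u : ℝ)) - Complex.exp (Complex.I * θ₀)) = 1 := by
  set a := Complex.exp (Complex.I * (θ₀ + u : ℝ)) with hadef
  set b := Complex.exp (Complex.I * (θ₀ - u : ℝ)) with hbdef
  set z := Complex.exp (Complex.I * (θ₀ : ℝ)) with hzdef
  have hab : a * b = z * z := by
    rw [hadef, hbdef, hzdef, ← Complex.exp_add, ← Complex.exp_add]
    congr 1
    push_cast; ring
  have ha' : a - z ≠ 0 := sub_ne_zero.mpr ha
  have hb' : b - z ≠ 0 := sub_ne_zero.mpr hb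
  field_simp
  linear_combination hab

lemma aux_split (f : ℂ → ℂ) (z₀ t : ℂ) (ht : t ≠ z₀) :
    f t * t / (t - z₀) = dslope f z₀ t * t + f z₀ * (t / (t - z₀)) := by
  rw [dslope_of_ne _ ht, slope_def_field]
  field_simp [sub_ne_zero.mpr ht]
  ring


/-- Relation (III) of (3), specialized to the unit circle: for f holomorphic on a ball of
radius r > 1, the Cauchy principal value (1/π)P∫ f(e^{iφ})e^{iφ}/(e^{iφ}−e^{iθ₀}) dφ
exists and reproduces the boundary value f(e^{iθ₀}). -/
theorem stmt_10 (r : ℝ) (hr : 1 < r) (f : ℂ → ℂ)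
    (hf : DifferentiableOn ℂ f (Metric.ball 0 r)) (θ₀ : ℝ) :
    Filter.Tendsto (fun ε : ℝ =>
        (1 / (Real.pi : ℂ)) *
          ((∫ φ in (θ₀ + ε)..(θ₀ + Real.pi),
              f (Complex.exp (Complex.I * φ)) * Complex.exp (Complex.I * φ) /
                (Complex.exp (Complex.I * φ) - Complex.exp (Complex.I * θ₀))) +
            ∫ φ in (θ₀ - Real.pi)..(θ₀ - ε),
              f (Complex.exp (Complex.I * φ)) * Complex.exp (Complex.I * φ) /
                (Complex.exp (Complex.I * φ) - Complex.exp (Complex.I * θ₀))))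
      (nhdsWithin 0 (Set.Ioi 0)) (nhds (f (Complex.exp (Complex.I * θ₀)))) := by
  have hπ : (0:ℝ) < Real.pi := Real.pi_pos
  set z₀ : ℂ := Complex.exp (Complex.I * θ₀) with hz₀def
  set g : ℂ → ℂ := dslope f z₀ with hgdef
  set G : ℝ → ℂ := fun φ => g (Complex.exp (Complex.I * φ)) * Complex.exp (Complex.I * φ)
    with hGdef
  set h : ℝ → ℂ := fun φ => Complex.exp (Complex.I * φ) / (Complex.exp (Complex.I * φ) - z₀)
    with hhdef
  -- basic facts
  have habs : ∀ φ : ℝ, ‖Complex.exp (Complex.I * φ)‖ = 1 := by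
    intro φ; rw [mul_comm]; exact Complex.norm_exp_ofReal_mul_I φ
  have hmem : ∀ φ : ℝ, Complex.exp (Complex.I * φ) ∈ ball (0:ℂ) r := by
    intro φ
    simp only [mem_ball, Complex.dist_eq, sub_zero, habs]
    exact hr
  have hexpC : Continuous fun φ : ℝ => Complex.exp (Complex.I * φ) :=
    Complex.continuous_exp.comp (continuous_const.mul Complex.continuous_ofReal)
  have hg : DifferentiableOn ℂ g (ball (0:ℂ) r) :=
    (Complex.differentiableOn_dslope (isOpen_ball.mem_nhds (hmem θ₀))).mpr hf
  have hGcont : Continuous G :=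
    (hg.continuousOn.comp_continuous hexpC hmem).mul hexpC
  have hGint : ∀ a b : ℝ, IntervalIntegrable G MeasureTheory.volume a b :=
    fun a b => hGcont.intervalIntegrable a b
  -- circle integral of g is zero
  have hcirc : circleIntegral g 0 1 = 0 := by
    apply circleIntegral_eq_zero_of_differentiable_on_off_countable zero_le_one
      Set.countable_empty
    · exact hg.continuousOn.mono (closedBall_subset_ball hr)
    · intro z hz
      exact hg.differentiableAt (isOpen_ball.mem_nhds (ball_subset_ball hr.le hz.1))
  have hint2π : (∫ φ in (0:ℝ)..(2*Real.pi), G φ) = 0 := by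
    have heq : circleIntegral g 0 1 = ∫ θ in (0:ℝ)..(2*Real.pi), Complex.I * G θ := by
      rw [circleIntegral]
      apply intervalIntegral.integral_congr
      intro θ _
      simp only [deriv_circleMap, circleMap, smul_eq_mul, zero_add, Complex.ofReal_one,
        one_mul, hGdef]
      rw [mul_comm Complex.I (θ:ℂ)]
      ring
    rw [heq, intervalIntegral.integral_const_mul] at hcirc
    rcases mul_eq_zero.mp hcirc with hI | h0
    · exact absurd hI Complex.I_ne_zero
    · exact h0
  -- periodicity
  have hper : Function.Periodic G (2*Real.pi) := by
    intro φ
    have hE : Complex.exp (Complex.I * ((φ + 2*Real.pi : ℝ):ℂ)) =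
        Complex.exp (Complex.I * (φ:ℂ)) := by
      rw [show Complex.I * ((φ + 2*Real.pi : ℝ):ℂ)
            = Complex.I * (φ:ℂ) + 2*(Real.pi:ℂ)*Complex.I by push_cast; ring,
        Complex.exp_add, Complex.exp_two_pi_mul_I, mul_one]
    simp only [hGdef, hE]
  have hmid : (∫ φ in (θ₀ - Real.pi)..(θ₀ + Real.pi), G φ) = 0 := by
    have hp := hper.intervalIntegral_add_eq (θ₀ - Real.pi) 0
    rw [show θ₀ - Real.pi + 2*Real.pi = θ₀ + Real.pi by ring, zero_add] at hp
    rw [hp]; exact hint2π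
  -- the target limit function
  set T : ℝ → ℂ := fun ε =>
    (1 / (Real.pi : ℂ)) *
      (-(∫ φ in (θ₀ - ε)..(θ₀ + ε), G φ) + f z₀ * ((Real.pi - ε : ℝ) : ℂ)) with hTdef
  have hTlim : Tendsto T (nhds 0) (nhds (f z₀)) := by
    have hF : Continuous fun x => ∫ t in θ₀..x, G t :=
      intervalIntegral.continuous_primitive hGint θ₀
    have hA : Tendsto (fun ε : ℝ => ∫ φ in (θ₀-ε)..(θ₀+ε), G φ) (nhds 0) (nhds 0) := by
      have hrew : ∀ ε : ℝ, (∫ φ in (θ₀-ε)..(θ₀+ε), G φ)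
          = (∫ t in θ₀..(θ₀+ε), G t) - ∫ t in θ₀..(θ₀-ε), G t := fun ε =>
        (intervalIntegral.integral_interval_sub_left (hGint _ _) (hGint _ _)).symm
      have h1 : Tendsto (fun ε : ℝ => θ₀ + ε) (nhds 0) (nhds θ₀) := by
        simpa using (tendsto_const_nhds.add (tendsto_id (x := nhds (0:ℝ))))
      have h2 : Tendsto (fun ε : ℝ => θ₀ - ε) (nhds 0) (nhds θ₀) := by
        simpa using (tendsto_const_nhds.sub (tendsto_id (x := nhds (0:ℝ))))
      have := ((hF.tendsto θ₀).comp h1).sub ((hF.tendsto θ₀).comp h2)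
      simp only [intervalIntegral.integral_same, sub_zero] at this
      exact Tendsto.congr (fun ε => (hrew ε).symm) this
    have hB : Tendsto (fun ε : ℝ => ((Real.pi - ε : ℝ) : ℂ)) (nhds 0)
        (nhds ((Real.pi : ℝ) : ℂ)) := by
      have : Tendsto (fun ε : ℝ => (Real.pi - ε : ℝ)) (nhds 0) (nhds Real.pi) := by
        simpa using (tendsto_const_nhds.sub (tendsto_id (x := nhds (0:ℝ))))
      exact (Complex.continuous_ofReal.tendsto _).comp this
    have hcomb : Tendsto (fun ε : ℝ => (1 / (Real.pi : ℂ)) *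
        (-(∫ φ in (θ₀ - ε)..(θ₀ + ε), G φ) + f z₀ * ((Real.pi - ε : ℝ) : ℂ))) (nhds 0)
        (nhds ((1 / (Real.pi : ℂ)) * (-(0:ℂ) + f z₀ * ((Real.pi:ℝ):ℂ)))) :=
      Filter.Tendsto.const_mul _ (hA.neg.add ((tendsto_const_nhds (x := f z₀)).mul hB))
    have hval : (1 / (Real.pi : ℂ)) * (-(0:ℂ) + f z₀ * ((Real.pi : ℝ) : ℂ)) = f z₀ := by
      have hπ' : ((Real.pi : ℝ) : ℂ) ≠ 0 := Complex.ofReal_ne_zero.mpr (ne_of_gt hπ)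
      field_simp
      simp
    rw [hval] at hcomb
    exact hcomb
  -- eventual equality on (0, π)
  have hEv : (fun ε : ℝ =>
        (1 / (Real.pi : ℂ)) *
          ((∫ φ in (θ₀ + ε)..(θ₀ + Real.pi),
              f (Complex.exp (Complex.I * φ)) * Complex.exp (Complex.I * φ) /
                (Complex.exp (Complex.I * φ) - z₀)) +
            ∫ φ in (θ₀ - Real.pi)..(θ₀ - ε),
              f (Complex.exp (Complex.I * φ)) * Complex.exp (Complex.I * φ) /
                (Complex.exp (Complex.I * φ) - z₀)))
      =ᶠ[nhdsWithin 0 (Set.Ioi 0)] T := by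
    filter_upwards [Ioo_mem_nhdsGT_of_mem (by exact ⟨le_refl 0, hπ⟩ : (0:ℝ) ∈ Ico 0 Real.pi)]
      with ε hε
    obtain ⟨hε0, hεπ⟩ := hε
    -- nonvanishing on the relevant intervals
    have hne : ∀ u : ℝ, u ∈ Icc ε Real.pi →
        Complex.exp (Complex.I * ((θ₀ + u : ℝ):ℂ)) ≠ z₀ ∧
        Complex.exp (Complex.I * ((θ₀ - u : ℝ):ℂ)) ≠ z₀ := by
      intro u hu
      have h1 : 0 < u := lt_of_lt_of_le hε0 hu.1
      have h2 : u < 2 * Real.pi := lt_of_le_of_lt hu.2 (by linarith)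
      exact ⟨aux_exp_add_ne (aux_exp_ne_one h1 h2), aux_exp_sub_ne (aux_exp_ne_one h1 h2)⟩
    have hmemIccP : ∀ φ ∈ Set.uIcc (θ₀ + ε) (θ₀ + Real.pi),
        Complex.exp (Complex.I * (φ:ℂ)) ≠ z₀ := by
      intro φ hφ
      rw [Set.uIcc_of_le (by linarith)] at hφ
      have hu : φ - θ₀ ∈ Icc ε Real.pi := ⟨by linarith [hφ.1], by linarith [hφ.2]⟩
      have := (hne _ hu).1
      rwa [show θ₀ + (φ - θ₀) = φ by ring] at this
    have hmemIccM : ∀ φ ∈ Set.uIcc (θ₀ - Real.pi) (θ₀ - ε),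
        Complex.exp (Complex.I * (φ:ℂ)) ≠ z₀ := by
      intro φ hφ
      rw [Set.uIcc_of_le (by linarith)] at hφ
      have hu : θ₀ - φ ∈ Icc ε Real.pi := ⟨by linarith [hφ.2], by linarith [hφ.1]⟩
      have := (hne _ hu).2
      rwa [show θ₀ - (θ₀ - φ) = φ by ring] at this
    -- integrability of h on each interval
    have hhco : ∀ a b : ℝ, (∀ φ ∈ Set.uIcc a b, Complex.exp (Complex.I * (φ:ℂ)) ≠ z₀) →
        IntervalIntegrable h MeasureTheory.volume a b := by
      intro a b hab
      apply ContinuousOn.intervalIntegrable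
      apply ContinuousOn.div hexpC.continuousOn
        ((hexpC.sub continuous_const).continuousOn)
      intro φ hφ
      exact sub_ne_zero.mpr (hab φ hφ)
    -- split the two integrals
    have hsplit : ∀ a b : ℝ, (∀ φ ∈ Set.uIcc a b, Complex.exp (Complex.I * (φ:ℂ)) ≠ z₀) →
        (∫ φ in a..b, f (Complex.exp (Complex.I * φ)) * Complex.exp (Complex.I * φ) /
            (Complex.exp (Complex.I * φ) - z₀))
          = (∫ φ in a..b, G φ) + f z₀ * ∫ φ in a..b, h φ := by
      intro a b hab
      rw [show (∫ φ in a..b, f (Complex.exp (Complex.I * φ)) * Complex.exp (Complex.I * φ) /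
            (Complex.exp (Complex.I * φ) - z₀))
          = ∫ φ in a..b, (G φ + f z₀ * h φ) from intervalIntegral.integral_congr ?_,
        intervalIntegral.integral_add (hGint a b) ((hhco a b hab).const_mul (f z₀)),
        intervalIntegral.integral_const_mul]
      intro φ hφ
      exact aux_split f z₀ _ (hab φ hφ)
    -- principal value of h
    have hhcoε : IntervalIntegrable (fun u : ℝ => h (θ₀ + u)) MeasureTheory.volume ε Real.pi := by
      apply ContinuousOn.intervalIntegrable
      apply ContinuousOn.div (hexpC.comp (continuous_const.add continuous_id)).continuousOn
        ((hexpC.comp (continuous_const.add continuous_id)).sub continuous_const).continuousOn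
      intro u hu
      rw [Set.uIcc_of_le hεπ.le] at hu
      exact sub_ne_zero.mpr (hne u hu).1
    have hhcoε' : IntervalIntegrable (fun u : ℝ => h (θ₀ - u)) MeasureTheory.volume ε Real.pi := by
      apply ContinuousOn.intervalIntegrable
      apply ContinuousOn.div (hexpC.comp (continuous_const.sub continuous_id)).continuousOn
        ((hexpC.comp (continuous_const.sub continuous_id)).sub continuous_const).continuousOn
      intro u hu
      rw [Set.uIcc_of_le hεπ.le] at hu
      exact sub_ne_zero.mpr (hne u hu).2
    have hPV : (∫ φ in (θ₀ + ε)..(θ₀ + Real.pi), h φ)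
        + (∫ φ in (θ₀ - Real.pi)..(θ₀ - ε), h φ) = ((Real.pi - ε : ℝ) : ℂ) := by
      rw [← intervalIntegral.integral_comp_add_left h θ₀,
        ← intervalIntegral.integral_comp_sub_left h θ₀,
        ← intervalIntegral.integral_add hhcoε hhcoε']
      rw [show (∫ u in ε..Real.pi, (h (θ₀ + u) + h (θ₀ - u)))
          = ∫ _u in ε..Real.pi, (1:ℂ) from intervalIntegral.integral_congr ?_]
      · rw [intervalIntegral.integral_const]
        simp [Complex.real_smul]
      · intro u hu
        rw [Set.uIcc_of_le hεπ.le] at hu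
        have h1 : 0 < u := lt_of_lt_of_le hε0 hu.1
        have h2 : u < 2 * Real.pi := lt_of_le_of_lt hu.2 (by linarith)
        exact aux_sym (aux_exp_add_ne (aux_exp_ne_one h1 h2))
          (aux_exp_sub_ne (aux_exp_ne_one h1 h2))
    -- combining the G-integrals
    have hGsum : (∫ φ in (θ₀ + ε)..(θ₀ + Real.pi), G φ)
        + (∫ φ in (θ₀ - Real.pi)..(θ₀ - ε), G φ)
        = -(∫ φ in (θ₀ - ε)..(θ₀ + ε), G φ) := by
      have h1 := intervalIntegral.integral_add_adjacent_intervals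
        (hGint (θ₀ - Real.pi) (θ₀ - ε)) (hGint (θ₀ - ε) (θ₀ + Real.pi))
      have h2 := intervalIntegral.integral_add_adjacent_intervals
        (hGint (θ₀ - ε) (θ₀ + ε)) (hGint (θ₀ + ε) (θ₀ + Real.pi))
      linear_combination h1 + h2 + hmid
    rw [hsplit _ _ hmemIccP, hsplit _ _ hmemIccM, hTdef]
    linear_combination (1 / (Real.pi : ℂ)) * hGsum
      + (f z₀ / (Real.pi : ℂ)) * hPV
  exact (Filter.Tendsto.congr' hEv.symm (hTlim.mono_left nhdsWithin_le_nhds))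
end

section
/- (Li's Theorem on the location of a singularity pair, in sign-change density form.) Let α ∈ ℝ with 0 < α < π and α/π irrational. For N ≥ 1 let S(N) be the number of integers n with 1 ≤ n ≤ N such that cos(nα) · cos((n+1)α) < 0 (i.e., the number of sign changes of the sequence (cos(nα)) up to N). Then lim_{N→∞} S(N)/N = α/π. -/
open Real Filter

/-- Li's Theorem (Theorem 2), sign-change density form: for 0 < α < π with α/π
irrational, the number S(N) of n ∈ {1,…,N} with cos(nα)·cos((n+1)α) < 0 satisfies
S(N)/N → α/π. -/
theorem stmt_13 (α : ℝ) (hα0 : 0 < α) (hαπ : α < Real.pi)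
    (hirr : Irrational (α / Real.pi)) (S : ℕ → ℕ)
    (hS : ∀ N : ℕ, S N = ((Finset.Icc 1 N).filter
        (fun n : ℕ => Real.cos (n * α) * Real.cos ((n + 1) * α) < 0)).card) :
    Filter.Tendsto (fun N : ℕ => (S N : ℝ) / N) Filter.atTop (nhds (α / Real.pi)) := by
  have hπ : (0:ℝ) < π := Real.pi_pos
  set β : ℝ := α / π with hβ
  have hβ0 : 0 < β := div_pos hα0 hπ
  have hβ1 : β < 1 := (div_lt_one hπ).mpr hαπ
  have hαβ : α = β * π := by rw [hβ, div_mul_cancel₀ _ hπ.ne']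
  -- the floor counting function
  set f : ℕ → ℤ := fun n => ⌊(n:ℝ) * β + 1/2⌋ with hf
  -- irrationality of n*β + 1/2 for n ≥ 1
  have hirr_n : ∀ n : ℕ, 1 ≤ n → Irrational ((n:ℝ) * β + 1/2) := by
    intro n hn
    have h1 : Irrational ((n:ℝ) * β) := hirr.natCast_mul (by omega)
    have h2 := h1.add_ratCast (1/2)
    simpa using h2
  -- strict floor bounds
  have hfrac : ∀ n : ℕ, 1 ≤ n →
      (f n : ℝ) < (n:ℝ) * β + 1/2 ∧ (n:ℝ) * β + 1/2 < (f n : ℝ) + 1 := by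
    intro n hn
    have h1 : (f n : ℝ) ≤ (n:ℝ) * β + 1/2 := by simp only [hf]; exact Int.floor_le _
    have h2 : (n:ℝ) * β + 1/2 < (f n : ℝ) + 1 := by
      simp only [hf]; exact Int.lt_floor_add_one _
    refine ⟨lt_of_le_of_ne h1 ?_, h2⟩
    intro h
    exact (hirr_n n hn) ⟨(f n : ℚ), by push_cast; exact h⟩
  -- cos(nα - f n * π) > 0 for n ≥ 1
  have hpos : ∀ n : ℕ, 1 ≤ n → 0 < Real.cos ((n:ℝ) * α - (f n : ℝ) * π) := by
    intro n hn
    obtain ⟨h1, h2⟩ := hfrac n hn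
    apply Real.cos_pos_of_mem_Ioo
    simp only [Set.mem_Ioo]
    rw [hαβ]
    constructor
    · nlinarith
    · nlinarith
  -- cos(nα - f n π) = (-1)^(f n) * cos(nα)
  have hsign : ∀ n : ℕ,
      Real.cos ((n:ℝ) * α - (f n : ℝ) * π) = (-1:ℝ) ^ (f n) * Real.cos ((n:ℝ) * α) :=
    fun n => Real.cos_sub_int_mul_pi _ _
  -- step bounds on f
  have hmono : ∀ n : ℕ, f n ≤ f (n+1) := by
    intro n
    simp only [hf]
    apply Int.floor_le_floor
    push_cast
    nlinarith
  have hstep : ∀ n : ℕ, f (n+1) ≤ f n + 1 := by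
    intro n
    have h1 : ((n+1:ℕ):ℝ) * β + 1/2 ≤ ((n:ℝ) * β + 1/2) + 1 := by push_cast; nlinarith
    have h2 := Int.floor_le_floor h1
    rw [Int.floor_add_one] at h2
    simpa only [hf] using h2
  -- the key equivalence
  have hkey : ∀ n : ℕ, 1 ≤ n →
      (Real.cos ((n:ℝ) * α) * Real.cos (((n:ℝ) + 1) * α) < 0 ↔ f (n+1) = f n + 1) := by
    intro n hn
    have hp1 := hpos n hn
    have hp2 := hpos (n+1) (by omega)
    have hs1 := hsign n
    have hs2 := hsign (n+1)
    have hcast : ((n:ℝ) + 1) = ((n+1 : ℕ) : ℝ) := by push_cast; ring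
    have hprod : 0 < ((-1:ℝ) ^ (f n) * Real.cos ((n:ℝ) * α)) *
        ((-1:ℝ) ^ (f (n+1)) * Real.cos (((n+1:ℕ):ℝ) * α)) := by
      rw [← hs1, ← hs2]; exact mul_pos hp1 hp2
    have heq : ((-1:ℝ) ^ (f n) * Real.cos ((n:ℝ) * α)) *
        ((-1:ℝ) ^ (f (n+1)) * Real.cos (((n+1:ℕ):ℝ) * α))
        = (-1:ℝ) ^ (f n + f (n+1)) *
          (Real.cos ((n:ℝ) * α) * Real.cos (((n+1:ℕ):ℝ) * α)) := by
      rw [zpow_add₀ (by norm_num : (-1:ℝ) ≠ 0)]; ring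
    rw [heq] at hprod
    rw [hcast]
    rcases Int.even_or_odd (f n + f (n+1)) with he | ho
    · -- even: product positive, no step
      have h1 : (-1:ℝ) ^ (f n + f (n+1)) = 1 := he.neg_one_zpow
      rw [h1, one_mul] at hprod
      constructor
      · intro h; linarith
      · intro h
        obtain ⟨k, hk⟩ := he
        omega
    · -- odd: product negative, step
      have h1 : (-1:ℝ) ^ (f n + f (n+1)) = -1 := ho.neg_one_zpow
      rw [h1] at hprod
      constructor
      · intro _
        have hne : f n ≠ f (n+1) := by
          intro h
          obtain ⟨k, hk⟩ := ho
          omega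
        have hm := hmono n
        have hs := hstep n
        omega
      · intro h; linarith
  -- counting: S N = f (N+1) - f 1
  have hcard : ∀ N : ℕ, ((S N : ℤ)) = f (N+1) - f 1 := by
    intro N
    induction N with
    | zero =>
      rw [hS]
      simp
    | succ N ih =>
      rw [hS] at ih ⊢
      rw [← Finset.insert_Icc_right_eq_Icc_add_one (by omega : 1 ≤ N + 1), Finset.filter_insert]
      have hnotmem : (N+1 : ℕ) ∉ (Finset.Icc 1 N).filter
          (fun n : ℕ => Real.cos (n * α) * Real.cos ((n + 1) * α) < 0) := by
        intro h
        have := Finset.mem_Icc.mp (Finset.mem_filter.mp h).1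
        omega
      split_ifs with hP
      · rw [Finset.card_insert_of_notMem hnotmem]
        have hstep1 : f (N+1+1) = f (N+1) + 1 := (hkey (N+1) (by omega)).mp hP
        push_cast
        push_cast at ih
        omega
      · have hstep0 : f (N+1+1) = f (N+1) := by
          have h1 := hmono (N+1)
          have h2 := hstep (N+1)
          have h3 : ¬ f (N+1+1) = f (N+1) + 1 := fun h => hP ((hkey (N+1) (by omega)).mpr h)
          omega
        rw [hstep0]
        exact ih
  -- cast to ℝ
  have hSf : ∀ N : ℕ, (S N : ℝ) = (f (N+1) : ℝ) - (f 1 : ℝ) := by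
    intro N
    exact_mod_cast hcard N
  -- the error bound
  have hbound : ∀ N : ℕ, |((f (N+1) : ℝ) - (f 1 : ℝ)) - (N:ℝ) * β| ≤ 2 + |(f 1 : ℝ)| := by
    intro N
    have h1 : (f (N+1) : ℝ) ≤ ((N+1:ℕ):ℝ) * β + 1/2 := by
      simp only [hf]; exact Int.floor_le _
    have h2 : ((N+1:ℕ):ℝ) * β + 1/2 - 1 < (f (N+1) : ℝ) := by
      simp only [hf]; exact Int.sub_one_lt_floor _
    rw [abs_le]
    push_cast at h1 h2
    constructor
    · have := le_abs_self ((f 1 : ℝ))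
      nlinarith
    · have := neg_abs_le ((f 1 : ℝ))
      nlinarith
  -- the error term tends to zero
  have herr : Tendsto (fun N : ℕ => (((f (N+1) : ℝ) - (f 1 : ℝ)) - (N:ℝ) * β) / N)
      atTop (nhds 0) := by
    refine squeeze_zero_norm (a := fun N : ℕ => (2 + |(f 1 : ℝ)|) / (N:ℝ)) ?_
      (tendsto_const_div_atTop_nhds_zero_nat _)
    · intro N
      rcases Nat.eq_zero_or_pos N with h | h
      · subst h; simp
      · have hN0 : (0:ℝ) < (N:ℝ) := by positivity
        rw [Real.norm_eq_abs, abs_div, abs_of_pos hN0]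
        exact div_le_div_of_nonneg_right (hbound N) hN0.le
  have hmain : Tendsto (fun N : ℕ => β + (((f (N+1) : ℝ) - (f 1 : ℝ)) - (N:ℝ) * β) / N)
      atTop (nhds (β + 0)) := tendsto_const_nhds.add herr
  rw [add_zero] at hmain
  apply hmain.congr'
  filter_upwards [eventually_ge_atTop 1] with N hN
  have hN0 : (N:ℝ) ≠ 0 := Nat.cast_ne_zero.mpr (by omega)
  rw [hSf N]
  field_simp
  ring
end

section
/- Let k ∈ ℂ, let z₁, z₂ ∈ ℂ be nonzero, let L₁, L₂ ∈ ℂ, and define c_n = (−1)^n · (L₁ · z₁^{−n} + L₂ · z₂^{−n}) · γ_n(k) for n ∈ ℕ. Then for every n ∈ ℕ: ((k − n)/((n+1) · z₂)) · c_n + c_{n+1} = (−1)^n · L₁ · (z₂^{−1} − z₁^{−1}) · γ_{n+1}(k) · z₁^{−n}. -/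
lemma genBinom_succ (k : ℂ) (n : ℕ) :
    genBinom k (n + 1) = (k - n) / (n + 1) * genBinom k n := by
  have hf : (n.factorial : ℂ) ≠ 0 := by exact_mod_cast n.factorial_ne_zero
  have hn : (n : ℂ) + 1 ≠ 0 := Nat.cast_add_one_ne_zero n
  simp only [genBinom, Finset.prod_range_succ, Nat.factorial_succ]
  push_cast
  field_simp

/-- The elimination identity (21a): for the coefficients
c_n = (−1)^n (L₁z₁^{−n} + L₂z₂^{−n}) γ_n(k) of two equal-order singularities,
((k−n)/((n+1)z₂))c_n + c_{n+1} = (−1)^n L₁ (z₂⁻¹ − z₁⁻¹) γ_{n+1}(k) z₁^{−n}. -/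
theorem stmt_14 (k z₁ z₂ L₁ L₂ : ℂ) (hz₁ : z₁ ≠ 0) (hz₂ : z₂ ≠ 0) (c : ℕ → ℂ)
    (hc : ∀ n : ℕ,
      c n = (-1) ^ n * (L₁ * z₁ ^ (-(n : ℤ)) + L₂ * z₂ ^ (-(n : ℤ))) * genBinom k n)
    (n : ℕ) :
    ((k - (n : ℂ)) / (((n : ℂ) + 1) * z₂)) * c n + c (n + 1) =
      (-1) ^ n * L₁ * (z₂⁻¹ - z₁⁻¹) * genBinom k (n + 1) * z₁ ^ (-(n : ℤ)) := by
  rw [div_mul_eq_div_div, div_eq_mul_inv ((k - (n:ℂ)) / ((n:ℂ) + 1)) z₂, hc, hc, genBinom_succ]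
  simp only [Nat.cast_add, Nat.cast_one, neg_add, zpow_add₀ hz₁, zpow_add₀ hz₂,
    zpow_neg, zpow_natCast, zpow_one, ← inv_pow]
  ring
end

section
/- Let k ∈ ℂ, let z₁, z₂ ∈ ℂ be nonzero, let L₁, L₂ ∈ ℂ, and define c_n = (−1)^n · (L₁ · z₁^{−n} + L₂ · z₂^{−n}) · γ_n(k) for n ∈ ℕ. Let n ≥ 1 and suppose c_{n−1} ≠ 0 and c_n ≠ 0, and set R_m = c_{m+1}/c_m. Then (n+1) · R_n · z₁ · z₂ − (n − k) · ( (z₁ + z₂) − (n − k − 1)/(n · R_{n−1}) ) = 0. -/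
set_option maxHeartbeats 1000000 in
/-- The basic equation (22) for two singularities of equal order k: with
c_n = (−1)^n (L₁z₁^{−n} + L₂z₂^{−n}) γ_n(k) and R_m = c_{m+1}/c_m, for n ≥ 1 with
c_{n−1} ≠ 0 and c_n ≠ 0,
(n+1)R_n z₁ z₂ − (n−k)((z₁+z₂) − (n−k−1)/(nR_{n−1})) = 0. -/
theorem stmt_15 (k z₁ z₂ L₁ L₂ : ℂ) (hz₁ : z₁ ≠ 0) (hz₂ : z₂ ≠ 0) (c R : ℕ → ℂ)
    (hc : ∀ n : ℕ,
      c n = (-1) ^ n * (L₁ * z₁ ^ (-(n : ℤ)) + L₂ * z₂ ^ (-(n : ℤ))) * genBinom k n)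
    (hR : ∀ m : ℕ, R m = c (m + 1) / c m)
    (n : ℕ) (hn : 1 ≤ n) (h1 : c (n - 1) ≠ 0) (h2 : c n ≠ 0) :
    ((n : ℂ) + 1) * R n * z₁ * z₂ -
        ((n : ℂ) - k) * ((z₁ + z₂) - ((n : ℂ) - k - 1) / ((n : ℂ) * R (n - 1))) = 0 := by
  obtain ⟨m, rfl⟩ : ∃ m, n = m + 1 := ⟨n - 1, by omega⟩
  simp only [Nat.add_sub_cancel] at h1 ⊢
  set A : ℕ → ℂ := fun i => L₁ * z₁ ^ (-(i : ℤ)) + L₂ * z₂ ^ (-(i : ℤ)) with hA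
  have hc' : ∀ i : ℕ, c i = (-1) ^ i * A i * genBinom k i := by
    intro i; rw [hA]; exact hc i
  have zp : ∀ (z : ℂ) (i : ℕ), z ^ (-(i : ℤ)) = (z ^ i)⁻¹ := fun z i => by
    rw [zpow_neg, zpow_natCast]
  -- the fundamental recurrence for A
  have hrec : z₁ * z₂ * A (m + 2) - (z₁ + z₂) * A (m + 1) + A m = 0 := by
    simp only [hA, zp]
    have p1 : z₁ ^ (m + 2) ≠ 0 := pow_ne_zero _ hz₁
    have p2 : z₂ ^ (m + 2) ≠ 0 := pow_ne_zero _ hz₂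
    field_simp
    ring
  -- the step relation for genBinom
  have gstep : ∀ i : ℕ, genBinom k (i + 1) * ((i : ℂ) + 1) = genBinom k i * (k - i) := by
    intro i
    unfold genBinom
    rw [Finset.prod_range_succ, Nat.factorial_succ]
    have hfac : (i.factorial : ℂ) ≠ 0 := Nat.cast_ne_zero.mpr i.factorial_ne_zero
    have hi1 : ((i : ℂ) + 1) ≠ 0 := Nat.cast_add_one_ne_zero i
    push_cast
    field_simp
  -- nonvanishing facts
  have h2' : (-1 : ℂ) ^ (m + 1) * A (m + 1) * genBinom k (m + 1) ≠ 0 := by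
    rw [← hc' (m + 1)]; exact h2
  have h1' : (-1 : ℂ) ^ m * A m * genBinom k m ≠ 0 := by
    rw [← hc' m]; exact h1
  have hA1 : A (m + 1) ≠ 0 := (mul_ne_zero_iff.mp (mul_ne_zero_iff.mp h2').1).2
  have hG1 : genBinom k (m + 1) ≠ 0 := (mul_ne_zero_iff.mp h2').2
  have hA0 : A m ≠ 0 := (mul_ne_zero_iff.mp (mul_ne_zero_iff.mp h1').1).2
  have hG0 : genBinom k m ≠ 0 := (mul_ne_zero_iff.mp h1').2
  have hkm : k - (m : ℂ) ≠ 0 := by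
    intro h
    apply hG1
    unfold genBinom
    rw [Finset.prod_range_succ, h, mul_zero, zero_div]
  have hm1 : ((m : ℂ) + 1) ≠ 0 := Nat.cast_add_one_ne_zero m
  have hm2 : ((m : ℂ) + 2) ≠ 0 := by
    have h := Nat.cast_add_one_ne_zero (R := ℂ) (m + 1)
    have e : ((m : ℂ) + 2) = ((m + 1 : ℕ) : ℂ) + 1 := by push_cast; ring
    rw [e]; exact h
  -- cross-multiplied ratio formulas
  have e1 : R (m + 1) * (A (m + 1) * ((m : ℂ) + 2)) = -(A (m + 2) * (k - ((m : ℂ) + 1))) := by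
    have key1 : R (m + 1) * c (m + 1) = c (m + 2) := by
      rw [hR (m + 1)]; exact div_mul_cancel₀ _ h2
    rw [hc' (m + 1), hc' (m + 2)] at key1
    have g1 := gstep (m + 1)
    push_cast at g1
    have hps : ((-1 : ℂ)) ^ (m + 2) = -((-1 : ℂ)) ^ (m + 1) := by rw [pow_succ]; ring
    have hY : ((-1 : ℂ)) ^ (m + 1) ≠ 0 := pow_ne_zero _ (by norm_num)
    apply mul_left_cancel₀ (mul_ne_zero hY hG1)
    linear_combination ((m : ℂ) + 2) * key1 - ((-1 : ℂ)) ^ (m + 1) * A (m + 2) * g1 +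
      ((m : ℂ) + 2) * A (m + 2) * genBinom k (m + 2) * hps
  have e0 : R m * (A m * ((m : ℂ) + 1)) = -(A (m + 1) * (k - (m : ℂ))) := by
    have key0 : R m * c m = c (m + 1) := by
      rw [hR m]; exact div_mul_cancel₀ _ h1
    rw [hc' m, hc' (m + 1)] at key0
    have g0 := gstep m
    have hps : ((-1 : ℂ)) ^ (m + 1) = -((-1 : ℂ)) ^ m := by rw [pow_succ]; ring
    have hY : ((-1 : ℂ)) ^ m ≠ 0 := pow_ne_zero _ (by norm_num)
    apply mul_left_cancel₀ (mul_ne_zero hY hG0)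
    linear_combination ((m : ℂ) + 1) * key0 - ((-1 : ℂ)) ^ m * A (m + 1) * g0 +
      ((m : ℂ) + 1) * A (m + 1) * genBinom k (m + 1) * hps
  -- explicit fraction formulas
  have f1 : R (m + 1) = -(A (m + 2) * (k - ((m : ℂ) + 1))) / (A (m + 1) * ((m : ℂ) + 2)) := by
    rw [eq_div_iff (mul_ne_zero hA1 hm2)]; linear_combination e1
  have f0 : R m = -(A (m + 1) * (k - (m : ℂ))) / (A m * ((m : ℂ) + 1)) := by
    rw [eq_div_iff (mul_ne_zero hA0 hm1)]; linear_combination e0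
  clear hA zp hc' h2' h1'
  clear_value A
  push_cast
  rw [f1, f0]
  field_simp
  linear_combination ((m:ℂ)+2) * (((m:ℂ)+1)-k) * (k - (m:ℂ)) * hrec
end

section
/- Let ξ ∈ ℝ. Then the principal-value Hilbert transform of sin equals cos at ξ: the limit as m → ∞ of (1/π) · ( ∫_{ξ + 1/m}^{ξ + m} sin(x)/(x − ξ) dx + ∫_{ξ − m}^{ξ − 1/m} sin(x)/(x − ξ) dx ) exists and equals cos(ξ). -/
set_option maxHeartbeats 1000000

open MeasureTheory Set Filter Real Topology

/-- ∫ s in Ioi 0, exp(-(t s)) = 1/t for t > 0. -/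
lemma int_exp_Ioi {t : ℝ} (ht : 0 < t) :
    ∫ s in Ioi (0:ℝ), Real.exp (-(t * s)) = 1 / t := by
  have hint : IntegrableOn (fun s : ℝ => Real.exp (-(t * s))) (Ioi 0) := by
    simpa [neg_mul] using exp_neg_integrableOn_Ioi 0 ht
  have h := integral_Ioi_of_hasDerivAt_of_tendsto'
    (f := fun s : ℝ => -Real.exp (-(t * s)) / t)
    (f' := fun s : ℝ => Real.exp (-(t * s))) (a := 0) (m := 0)
    (fun x _ => by
      have : HasDerivAt (fun s : ℝ => Real.exp (-(t * s))) (Real.exp (-(t * x)) * (-t)) x := by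
        have h1 : HasDerivAt (fun s : ℝ => -(t * s)) (-t) x := by
          simpa using ((hasDerivAt_id x).const_mul t).fun_neg
        exact (Real.hasDerivAt_exp _).comp x h1
      have h2 := (this.div_const t).fun_neg
      simpa [neg_div, mul_neg, mul_div_assoc, div_self ht.ne'] using h2)
    hint ?_
  · rw [h]; field_simp; simp
  · have h1 : Tendsto (fun s : ℝ => -(t * s)) atTop atBot := by
      exact tendsto_neg_atTop_atBot.comp (tendsto_id.const_mul_atTop ht)
    have := (Real.tendsto_exp_atBot.comp h1).neg
    simpa [Function.comp] using (this.div_const t)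

/-- ∫ t in 0..M, exp(-(s t)) sin t = (1 - exp(-(s M))(cos M + s sin M))/(1+s²). -/
lemma int_exp_sin (s M : ℝ) :
    ∫ t in (0:ℝ)..M, Real.exp (-(s * t)) * Real.sin t
      = (1 - Real.exp (-(s * M)) * (Real.cos M + s * Real.sin M)) / (1 + s ^ 2) := by
  have hs : (1 : ℝ) + s ^ 2 ≠ 0 := by positivity
  have key : ∀ x : ℝ, HasDerivAt
      (fun t : ℝ => -(Real.exp (-(s * t)) * (s * Real.sin t + Real.cos t)) / (1 + s ^ 2))
      (Real.exp (-(s * x)) * Real.sin x) x := by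
    intro x
    have he : HasDerivAt (fun t : ℝ => Real.exp (-(s * t))) (Real.exp (-(s * x)) * (-s)) x :=
      (Real.hasDerivAt_exp _).comp x (by simpa using ((hasDerivAt_id x).const_mul s).fun_neg)
    have hg : HasDerivAt (fun t : ℝ => s * Real.sin t + Real.cos t)
        (s * Real.cos x + -Real.sin x) x :=
      ((Real.hasDerivAt_sin x).const_mul s).add (Real.hasDerivAt_cos x)
    have h := ((he.fun_mul hg).fun_neg.div_const (1 + s ^ 2))
    refine h.congr_deriv ?_
    rw [div_eq_iff hs]
    ring
  rw [intervalIntegral.integral_eq_sub_of_hasDerivAt (fun x _ => key x)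
      (((Real.continuous_exp.comp (by continuity)).mul Real.continuous_sin).intervalIntegrable 0 M)]
  simp [Real.sin_zero, Real.cos_zero]
  ring

lemma dirichlet_eq {M : ℝ} (hM : 0 < M) :
    ∫ t in (0:ℝ)..M, Real.sin t / t
      = ∫ s in Ioi (0:ℝ),
          (1 - Real.exp (-(s * M)) * (Real.cos M + s * Real.sin M)) / (1 + s ^ 2) := by
  have hcont : Continuous fun p : ℝ × ℝ => Real.exp (-(p.1 * p.2)) * Real.sin p.1 :=
    (Real.continuous_exp.comp (continuous_fst.mul continuous_snd).neg).mul
      (Real.continuous_sin.comp continuous_fst)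
  have hInt : Integrable (Function.uncurry fun t s : ℝ => Real.exp (-(t * s)) * Real.sin t)
      ((volume.restrict (Ioc 0 M)).prod (volume.restrict (Ioi 0))) := by
    have hm : AEStronglyMeasurable
        (Function.uncurry fun t s : ℝ => Real.exp (-(t * s)) * Real.sin t)
        ((volume.restrict (Ioc 0 M)).prod (volume.restrict (Ioi 0))) :=
      hcont.aestronglyMeasurable
    rw [integrable_prod_iff hm]
    simp only [Function.uncurry_apply_pair]
    constructor
    · filter_upwards [ae_restrict_mem measurableSet_Ioc] with t ht
      have ht0 : 0 < t := ht.1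
      have : IntegrableOn (fun s : ℝ => Real.exp (-(t * s))) (Ioi 0) := by
        simpa [neg_mul] using exp_neg_integrableOn_Ioi 0 ht0
      exact this.mul_const _
    · have hb : ∀ᵐ t ∂(volume.restrict (Ioc (0:ℝ) M)),
          ‖∫ s in Ioi (0:ℝ), ‖Real.exp (-(t * s)) * Real.sin t‖‖ ≤ 1 := by
        filter_upwards [ae_restrict_mem measurableSet_Ioc] with t ht
        have ht0 : 0 < t := ht.1
        have hval : ∫ s in Ioi (0:ℝ), ‖Real.exp (-(t * s)) * Real.sin t‖
            = |Real.sin t| / t := by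
          have : ∀ s : ℝ, ‖Real.exp (-(t * s)) * Real.sin t‖
              = Real.exp (-(t * s)) * |Real.sin t| := by
            intro s
            rw [norm_mul, Real.norm_eq_abs, Real.norm_eq_abs, Real.abs_exp]
          simp_rw [this, integral_mul_const, int_exp_Ioi ht0]
          ring
        rw [hval, Real.norm_eq_abs, abs_of_nonneg (by positivity)]
        rw [div_le_one ht0]
        calc |Real.sin t| ≤ |t| := Real.abs_sin_le_abs
          _ = t := abs_of_pos ht0
      refine Integrable.mono' (integrable_const 1) ?_ hb
      exact hm.norm.integral_prod_right'
  have swap := integral_integral_swap hInt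
  rw [intervalIntegral.integral_of_le hM.le]
  have step1 : ∫ t in Ioc (0:ℝ) M, Real.sin t / t
      = ∫ t in Ioc (0:ℝ) M, ∫ s in Ioi (0:ℝ), Real.exp (-(t * s)) * Real.sin t := by
    refine setIntegral_congr_fun measurableSet_Ioc fun t ht => ?_
    rw [integral_mul_const, int_exp_Ioi ht.1]
    ring
  rw [step1, swap]
  refine setIntegral_congr_fun measurableSet_Ioi fun s _ => ?_
  rw [show (∫ t in Ioc (0:ℝ) M, Real.exp (-(t * s)) * Real.sin t)
      = ∫ t in (0:ℝ)..M, Real.exp (-(s * t)) * Real.sin t by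
    rw [intervalIntegral.integral_of_le hM.le]; simp_rw [mul_comm s]]
  exact int_exp_sin s M

lemma dirichlet_tendsto :
    Tendsto (fun M : ℝ => ∫ t in (0:ℝ)..M, Real.sin t / t) atTop (𝓝 (π / 2)) := by
  set E : ℝ → ℝ := fun M =>
    ∫ s in Ioi (0:ℝ), Real.exp (-(s * M)) * (Real.cos M + s * Real.sin M) / (1 + s ^ 2) with hE
  have hbound : ∀ {M : ℝ}, 0 < M → ∀ s ∈ Ioi (0:ℝ),
      ‖Real.exp (-(s * M)) * (Real.cos M + s * Real.sin M) / (1 + s ^ 2)‖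
        ≤ 2 * Real.exp (-(M * s)) := by
    intro M hM s hs
    have hs0 : (0:ℝ) < s := hs
    have hsm : |s * Real.sin M| ≤ s := by
      rw [abs_mul, abs_of_pos hs0]
      exact mul_le_of_le_one_right hs0.le (Real.abs_sin_le_one M)
    have h1 : |Real.cos M + s * Real.sin M| ≤ 1 + s :=
      (abs_add_le _ _).trans (add_le_add (Real.abs_cos_le_one M) hsm)
    have h2 : (1 + s) / (1 + s ^ 2) ≤ 2 := by
      rw [div_le_iff₀ (by positivity)]
      nlinarith [sq_nonneg (s - 1), sq_nonneg s]
    rw [Real.norm_eq_abs, abs_div, abs_mul, Real.abs_exp, abs_of_pos (by positivity : (0:ℝ) < 1 + s ^ 2)]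
    calc Real.exp (-(s * M)) * |Real.cos M + s * Real.sin M| / (1 + s ^ 2)
        ≤ Real.exp (-(s * M)) * (1 + s) / (1 + s ^ 2) := by gcongr
      _ = Real.exp (-(s * M)) * ((1 + s) / (1 + s ^ 2)) := by ring
      _ ≤ Real.exp (-(s * M)) * 2 := mul_le_mul_of_nonneg_left h2 (Real.exp_pos _).le
      _ = 2 * Real.exp (-(M * s)) := by rw [mul_comm M s]; ring
  have hEint : ∀ {M : ℝ}, 0 < M → IntegrableOn
      (fun s => Real.exp (-(s * M)) * (Real.cos M + s * Real.sin M) / (1 + s ^ 2))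
      (Ioi (0:ℝ)) := by
    intro M hM
    have hg : IntegrableOn (fun s : ℝ => 2 * Real.exp (-(M * s))) (Ioi 0) := by
      have := exp_neg_integrableOn_Ioi 0 hM
      simpa [neg_mul, IntegrableOn] using this.const_mul 2
    refine Integrable.mono' hg ?_ ?_
    · apply ContinuousOn.aestronglyMeasurable ?_ measurableSet_Ioi
      apply Continuous.continuousOn
      exact ((Real.continuous_exp.comp (continuous_id.mul continuous_const).neg).mul
        (continuous_const.add (continuous_id.mul continuous_const))).div
        (continuous_const.add (continuous_pow 2)) (fun s => by positivity)
    · filter_upwards [ae_restrict_mem measurableSet_Ioi] with s hs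
      exact hbound hM s hs
  have hsplit : ∀ {M : ℝ}, 0 < M →
      (∫ t in (0:ℝ)..M, Real.sin t / t) = π / 2 - E M := by
    intro M hM
    rw [dirichlet_eq hM, hE]
    have h1 : IntegrableOn (fun s : ℝ => (1 + s ^ 2)⁻¹) (Ioi 0) :=
      integrable_inv_one_add_sq.integrableOn
    have heq : ∀ s ∈ Ioi (0:ℝ),
        (1 - Real.exp (-(s * M)) * (Real.cos M + s * Real.sin M)) / (1 + s ^ 2)
          = (1 + s ^ 2)⁻¹ - Real.exp (-(s * M)) * (Real.cos M + s * Real.sin M) / (1 + s ^ 2) := by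
      intro s _
      have : (1:ℝ) + s ^ 2 ≠ 0 := by positivity
      field_simp
    rw [setIntegral_congr_fun measurableSet_Ioi heq, integral_sub h1 (hEint hM)]
    have : ∫ s in Ioi (0:ℝ), (1 + s ^ 2)⁻¹ = π / 2 := by
      rw [integral_Ioi_inv_one_add_sq]; simp
    rw [this]
  have hE0 : Tendsto E atTop (𝓝 0) := by
    have hnorm : ∀ᶠ M in atTop, ‖E M‖ ≤ 2 * (1 / M) := by
      filter_upwards [eventually_gt_atTop 0] with M hM
      have h1 : ‖E M‖ ≤ ∫ s in Ioi (0:ℝ), 2 * Real.exp (-(M * s)) := by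
        refine norm_integral_le_of_norm_le ?_ ?_
        · have := exp_neg_integrableOn_Ioi 0 hM
          simpa [neg_mul] using this.const_mul 2
        · filter_upwards [ae_restrict_mem measurableSet_Ioi] with s hs
          exact hbound hM s hs
      have h2 : ∫ s in Ioi (0:ℝ), 2 * Real.exp (-(M * s)) = 2 * (1 / M) := by
        rw [integral_const_mul, int_exp_Ioi hM]
      rw [h2] at h1; exact h1
    have hlim : Tendsto (fun M : ℝ => 2 * (1 / M)) atTop (𝓝 0) := by
      simpa [one_div] using tendsto_inv_atTop_zero.const_mul (2:ℝ)
    exact squeeze_zero_norm' hnorm hlim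
  have : Tendsto (fun M : ℝ => π / 2 - E M) atTop (𝓝 (π / 2)) := by
    simpa using (tendsto_const_nhds.sub hE0)
  refine this.congr' ?_
  filter_upwards [eventually_gt_atTop 0] with M hM
  exact (hsplit hM).symm

lemma sinc_norm_le (t : ℝ) : ‖Real.sin t / t‖ ≤ 1 := by
  rcases eq_or_ne t 0 with h | h
  · simp [h]
  · rw [Real.norm_eq_abs, abs_div, div_le_one (abs_pos.2 h)]
    exact Real.abs_sin_le_abs

lemma sinc_ii (a b : ℝ) : IntervalIntegrable (fun t => Real.sin t / t) volume a b := by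
  rw [intervalIntegrable_iff]
  refine Integrable.mono' (integrableOn_const measure_Ioc_lt_top.ne) ?_
    (ae_of_all _ sinc_norm_le)
  exact (Real.measurable_sin.div measurable_id).aestronglyMeasurable

lemma tendsto_int_nat :
    Tendsto (fun m : ℕ => ∫ t in (1/(m:ℝ))..(m:ℝ), Real.sin t / t) atTop (𝓝 (π / 2)) := by
  have hsplit : ∀ m : ℕ, (∫ t in (1/(m:ℝ))..(m:ℝ), Real.sin t / t)
      = (∫ t in (0:ℝ)..(m:ℝ), Real.sin t / t) - ∫ t in (0:ℝ)..(1/(m:ℝ)), Real.sin t / t := by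
    intro m
    have h := intervalIntegral.integral_add_adjacent_intervals
      (sinc_ii 0 (1/(m:ℝ))) (sinc_ii (1/(m:ℝ)) (m:ℝ))
    linarith
  simp_rw [hsplit]
  have h1 : Tendsto (fun m : ℕ => ∫ t in (0:ℝ)..(m:ℝ), Real.sin t / t) atTop (𝓝 (π / 2)) :=
    dirichlet_tendsto.comp tendsto_natCast_atTop_atTop
  have h2 : Tendsto (fun m : ℕ => ∫ t in (0:ℝ)..(1/(m:ℝ)), Real.sin t / t) atTop (𝓝 0) := by
    refine squeeze_zero_norm' ?_ tendsto_one_div_atTop_nhds_zero_nat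
    filter_upwards [eventually_ge_atTop 1] with m hm
    have hm0 : (0:ℝ) ≤ 1/(m:ℝ) := by positivity
    have := intervalIntegral.norm_integral_le_of_norm_le_const
      (C := 1) (f := fun t => Real.sin t / t) (a := (0:ℝ)) (b := 1/(m:ℝ))
      (fun x _ => sinc_norm_le x)
    simpa [abs_inv, Nat.abs_cast] using this
  simpa using h1.sub h2

/-- Example 5, equation (34): the principal-value Hilbert transform of sin equals cos:
(1/π)(∫_{ξ+1/m}^{ξ+m} + ∫_{ξ−m}^{ξ−1/m}) sin x/(x − ξ) dx → cos ξ as m → ∞. -/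
theorem stmt_19 (ξ : ℝ) :
    Filter.Tendsto (fun m : ℕ =>
        (1 / Real.pi) *
          ((∫ x in (ξ + 1 / (m : ℝ))..(ξ + (m : ℝ)), Real.sin x / (x - ξ)) +
            ∫ x in (ξ - (m : ℝ))..(ξ - 1 / (m : ℝ)), Real.sin x / (x - ξ)))
      Filter.atTop (nhds (Real.cos ξ)) := by
  have key : ∀ᶠ m : ℕ in atTop,
      (1 / Real.pi) * (2 * Real.cos ξ * ∫ t in (1/(m:ℝ))..(m:ℝ), Real.sin t / t)
        = (1 / Real.pi) *
          ((∫ x in (ξ + 1 / (m : ℝ))..(ξ + (m : ℝ)), Real.sin x / (x - ξ)) +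
            ∫ x in (ξ - (m : ℝ))..(ξ - 1 / (m : ℝ)), Real.sin x / (x - ξ)) := by
    filter_upwards [eventually_ge_atTop 1] with m hm
    have hm1 : (1:ℝ) ≤ (m:ℝ) := by exact_mod_cast hm
    have hm0 : (0:ℝ) < 1/(m:ℝ) := by positivity
    have hle : 1/(m:ℝ) ≤ (m:ℝ) := le_trans (by simpa using (div_le_one (by linarith)).2 hm1) hm1
    have hpos : ∀ t ∈ uIcc (1/(m:ℝ)) (m:ℝ), 0 < t := by
      intro t ht
      rw [uIcc_of_le hle] at ht
      exact lt_of_lt_of_le hm0 ht.1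
    have hi1 : IntervalIntegrable (fun t => Real.sin (ξ + t) / t) volume (1/(m:ℝ)) (m:ℝ) := by
      apply ContinuousOn.intervalIntegrable
      exact ((Real.continuous_sin.comp (continuous_const.add continuous_id)).continuousOn).div
        continuousOn_id (fun t ht => (hpos t ht).ne')
    have hi2 : IntervalIntegrable (fun t => Real.sin (ξ - t) / (-t)) volume (1/(m:ℝ)) (m:ℝ) := by
      apply ContinuousOn.intervalIntegrable
      exact ((Real.continuous_sin.comp (continuous_const.sub continuous_id)).continuousOn).div
        continuous_neg.continuousOn (fun t ht => neg_ne_zero.2 (hpos t ht).ne')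
    have hA : (∫ x in (ξ + 1 / (m : ℝ))..(ξ + (m : ℝ)), Real.sin x / (x - ξ))
        = ∫ t in (1/(m:ℝ))..(m:ℝ), Real.sin (ξ + t) / t := by
      rw [← intervalIntegral.integral_comp_add_left (fun x => Real.sin x / (x - ξ)) ξ]
      simp
    have hB : (∫ x in (ξ - (m : ℝ))..(ξ - 1 / (m : ℝ)), Real.sin x / (x - ξ))
        = ∫ t in (1/(m:ℝ))..(m:ℝ), Real.sin (ξ - t) / (-t) := by
      rw [← intervalIntegral.integral_comp_sub_left (fun x => Real.sin x / (x - ξ)) ξ]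
      simp
    have hpt : ∀ t : ℝ, Real.sin (ξ + t) / t + Real.sin (ξ - t) / (-t)
        = 2 * Real.cos ξ * (Real.sin t / t) := by
      intro t
      rcases eq_or_ne t 0 with h | h
      · simp [h]
      · rw [div_neg, ← sub_eq_add_neg, ← sub_div, Real.sin_add, Real.sin_sub]
        ring
    rw [hA, hB, ← intervalIntegral.integral_add hi1 hi2]
    simp_rw [hpt]
    rw [intervalIntegral.integral_const_mul]
  have hlim : Tendsto (fun m : ℕ =>
      (1 / Real.pi) * (2 * Real.cos ξ * ∫ t in (1/(m:ℝ))..(m:ℝ), Real.sin t / t))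
      atTop (𝓝 (Real.cos ξ)) := by
    have := (tendsto_int_nat.const_mul (2 * Real.cos ξ)).const_mul (1 / Real.pi)
    have heq : (1 / Real.pi) * (2 * Real.cos ξ * (π / 2)) = Real.cos ξ := by
      field_simp
    rwa [heq] at this
  exact hlim.congr' key
end
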